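/- Let T be a tree with at least one edge and D ⊆ V(T) satisfy α(T) = α(T − D) + |D|. Then there exists a pendant vertex x of T with x ∉ D. -/

import Mathlib

open SimpleGraph
open scoped Classical

noncomputable section

/-- The adjacency matrix of a signed graph `(G, σ)`. -/
def sAdj {V : Type*} [Fintype V] (G : SimpleGraph V) (σ : Sym2 V → ℝ) : Matrix V V ℝ :=
  fun i j => if G.Adj i j then σ s(i, j) else 0

/-- The rank of a signed graph. -/
def srank {V : Type*} [Fintype V] (G : SimpleGraph V) (σ : Sym2 V → ℝ) : ℕ :=
  (sAdj G σ).rank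

/-- The independence number of a graph. -/
def indepNum {V : Type*} (G : SimpleGraph V) : ℕ :=
  sSup {n | ∃ s : Finset V, (∀ a ∈ s, ∀ b ∈ s, ¬ G.Adj a b) ∧ s.card = n}

/-- The matching number of a graph. -/
def matchNum {V : Type*} (G : SimpleGraph V) : ℕ :=
  sSup {n | ∃ M : G.Subgraph, M.IsMatching ∧ M.edgeSet.ncard = n}

/-- The cyclomatic number `|E| - |V| + ω` of a graph (as a natural number;
the quantity is always nonnegative). -/
def cyclomatic {V : Type*} [Fintype V] (G : SimpleGraph V) : ℕ :=
  G.edgeSet.ncard + Nat.card G.ConnectedComponent - Fintype.card V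

/-- Deleting a set of vertices from a graph: the induced subgraph on the complement. -/
def vdel {V : Type*} (G : SimpleGraph V) (S : Set V) : SimpleGraph ↥(Sᶜ) :=
  G.induce Sᶜ

/-- Restriction of a sign function to a set of vertices. -/
def σres {V : Type*} (σ : Sym2 V → ℝ) (s : Set V) : Sym2 s → ℝ :=
  fun e => σ (e.map Subtype.val)

/-- A signed graph is lower-optimal if `r + 2α = 2n - 2c`. -/
def lowerOptimal {V : Type*} [Fintype V] (G : SimpleGraph V) (σ : Sym2 V → ℝ) : Prop :=
  srank G σ + 2 * _root_.indepNum G + 2 * cyclomatic G = 2 * Fintype.card V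

set_option linter.unusedSectionVars false

section Aux
variable {V : Type*} [Fintype V]

/-- independence number of the subgraph induced on a finset `s`. -/
def indA (G : SimpleGraph V) (s : Finset V) : ℕ :=
  sSup {n | ∃ t : Finset V, t ⊆ s ∧ (∀ a ∈ t, ∀ b ∈ t, ¬ G.Adj a b) ∧ t.card = n}

lemma indA_bdd (G : SimpleGraph V) (s : Finset V) :
    BddAbove {n | ∃ t : Finset V, t ⊆ s ∧ (∀ a ∈ t, ∀ b ∈ t, ¬ G.Adj a b) ∧ t.card = n} := by
  refine ⟨s.card, ?_⟩
  rintro n ⟨t, hts, -, rfl⟩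
  exact Finset.card_le_card hts

lemma indA_spec (G : SimpleGraph V) (s : Finset V) :
    ∃ t : Finset V, t ⊆ s ∧ (∀ a ∈ t, ∀ b ∈ t, ¬ G.Adj a b) ∧ t.card = indA G s := by
  have h := Nat.sSup_mem (s := {n | ∃ t : Finset V, t ⊆ s ∧ (∀ a ∈ t, ∀ b ∈ t, ¬ G.Adj a b) ∧ t.card = n})
    ⟨0, ∅, by simp⟩ (indA_bdd G s)
  exact h

lemma le_indA (G : SimpleGraph V) {s t : Finset V} (hts : t ⊆ s)
    (hind : ∀ a ∈ t, ∀ b ∈ t, ¬ G.Adj a b) : t.card ≤ indA G s :=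
  le_csSup (indA_bdd G s) ⟨t, hts, hind, rfl⟩

lemma indA_mono (G : SimpleGraph V) {s s' : Finset V} (h : s ⊆ s') :
    indA G s ≤ indA G s' := by
  obtain ⟨t, hts, hind, hcard⟩ := indA_spec G s
  rw [← hcard]
  exact le_indA G (hts.trans h) hind

lemma indA_le_card (G : SimpleGraph V) (s : Finset V) : indA G s ≤ s.card := by
  obtain ⟨t, hts, -, hcard⟩ := indA_spec G s
  rw [← hcard]; exact Finset.card_le_card hts

lemma indA_edgeless (G : SimpleGraph V) {s : Finset V}
    (h : ∀ a ∈ s, ∀ b ∈ s, ¬ G.Adj a b) : indA G s = s.card :=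
  le_antisymm (indA_le_card G s) (le_indA G le_rfl h)

lemma indA_le_erase (G : SimpleGraph V) (s : Finset V) (u : V) :
    indA G s ≤ indA G (s.erase u) + 1 := by
  obtain ⟨t, hts, hind, hcard⟩ := indA_spec G s
  have h1 : (t.erase u) ⊆ s.erase u := Finset.erase_subset_erase _ hts
  have h2 : t.card ≤ (t.erase u).card + 1 := by
    rcases Finset.decidableMem u t with h | h
    · simp [Finset.erase_eq_of_notMem h]
    · rw [Finset.card_erase_of_mem h]; omega
  calc indA G s = t.card := hcard.symm
    _ ≤ (t.erase u).card + 1 := h2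
    _ ≤ indA G (s.erase u) + 1 := by
        have := le_indA G h1 (fun a ha b hb => hind a (Finset.mem_of_mem_erase ha) b (Finset.mem_of_mem_erase hb))
        omega

lemma indA_le_erase_pair (G : SimpleGraph V) {s : Finset V} {u v : V}
    (hadj : G.Adj u v) : indA G s ≤ indA G ((s.erase u).erase v) + 1 := by
  obtain ⟨t, hts, hind, hcard⟩ := indA_spec G s
  have hne : ¬ (u ∈ t ∧ v ∈ t) := by
    rintro ⟨hu, hv⟩; exact hind u hu v hv hadj
  have h1 : (t.erase u).erase v ⊆ (s.erase u).erase v :=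
    Finset.erase_subset_erase _ (Finset.erase_subset_erase _ hts)
  have h2 : t.card ≤ ((t.erase u).erase v).card + 1 := by
    rcases Finset.decidableMem u t with hu | hu
    · rw [Finset.erase_eq_of_notMem hu]
      rcases Finset.decidableMem v t with hv | hv
      · simp [Finset.erase_eq_of_notMem hv]
      · rw [Finset.card_erase_of_mem hv]; omega
    · have hv : v ∉ t.erase u := fun hv => hne ⟨hu, Finset.mem_of_mem_erase hv⟩
      rw [Finset.erase_eq_of_notMem hv, Finset.card_erase_of_mem hu]; omega
  calc indA G s = t.card := hcard.symm
    _ ≤ ((t.erase u).erase v).card + 1 := h2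
    _ ≤ indA G ((s.erase u).erase v) + 1 := by
        have := le_indA G h1 (fun a ha b hb => hind a (Finset.mem_of_mem_erase (Finset.mem_of_mem_erase ha)) b (Finset.mem_of_mem_erase (Finset.mem_of_mem_erase hb)))
        omega

/-- extend an independent set of `t` by a vertex `x ∈ s` not adjacent to anything in `t`. -/
lemma indA_ext (G : SimpleGraph V) {s t : Finset V} {x : V} (hx : x ∈ s)
    (hts : t ⊆ s.erase x) (hnadj : ∀ y ∈ t, ¬ G.Adj x y) :
    indA G t + 1 ≤ indA G s := by
  obtain ⟨t0, ht0, hind, hcard⟩ := indA_spec G t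
  have hxt0 : x ∉ t0 := fun h => (Finset.ne_of_mem_erase (hts (ht0 h))) rfl
  have hsub : insert x t0 ⊆ s := by
    intro a ha
    rcases Finset.mem_insert.1 ha with rfl | ha
    · exact hx
    · exact (Finset.erase_subset _ _) (hts (ht0 ha))
  have hind' : ∀ a ∈ insert x t0, ∀ b ∈ insert x t0, ¬ G.Adj a b := by
    intro a ha b hb hadj
    rcases Finset.mem_insert.1 ha with ha | ha <;> rcases Finset.mem_insert.1 hb with hb | hb
    · rw [ha, hb] at hadj; exact G.loopless.irrefl x hadj
    · rw [ha] at hadj; exact hnadj b (ht0 hb) hadj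
    · rw [hb] at hadj; exact hnadj a (ht0 ha) hadj.symm
    · exact hind a ha b hb hadj
  have := le_indA G hsub hind'
  rw [Finset.card_insert_of_notMem hxt0, hcard] at this
  exact this

section Leaf
variable {V : Type*} [Fintype V]

lemma exists_leaf (G : SimpleGraph V) (hac : G.IsAcyclic) (s : Finset V)
    (hedge : ∃ a ∈ s, ∃ b ∈ s, G.Adj a b) :
    ∃ u ∈ s, ∃ v ∈ s, G.Adj u v ∧ ∀ z ∈ s, G.Adj u z → z = v := by
  classical
  obtain ⟨a, ha, b, hb, hab⟩ := hedge
  set L := {n | ∃ u v : V, ∃ p : G.Walk u v, p.IsPath ∧ (∀ x ∈ p.support, x ∈ s) ∧ p.length = n}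
    with hL
  have hbddL : BddAbove L := by
    refine ⟨Fintype.card V, ?_⟩
    rintro n ⟨u, v, p, hp, -, rfl⟩
    exact le_of_lt hp.length_lt
  have h1L : 1 ∈ L := by
    refine ⟨a, b, Walk.cons hab Walk.nil, ?_, ?_, rfl⟩
    · rw [Walk.cons_isPath_iff]
      exact ⟨Walk.IsPath.nil, by simp [hab.ne]⟩
    · intro x hx
      simp only [Walk.support_cons, Walk.support_nil, List.mem_cons, List.mem_singleton] at hx
      rcases hx with rfl | hx
      · exact ha
      · simp at hx; rw [hx]; exact hb
  have hmem := Nat.sSup_mem ⟨1, h1L⟩ hbddL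
  obtain ⟨u, v, p, hp, hsupp, hlen⟩ := hmem
  have hm1 : 1 ≤ sSup L := le_csSup hbddL h1L
  cases p with
  | nil => simp at hlen; omega
  | cons h q =>
    rename_i c
    -- u adj c, q : walk c v
    refine ⟨u, hsupp u (Walk.start_mem_support _), c, hsupp c (by simp), h, ?_⟩
    intro z hz hadjz
    by_contra hzc
    by_cases hzsupp : z ∈ (Walk.cons h q).support
    · -- build a cycle
      have hzu : z ≠ u := fun h => G.loopless.irrefl u (h ▸ hadjz)
      have htu := hp.takeUntil hzsupp
      have hedges : s(z, u) ∉ ((Walk.cons h q).takeUntil z hzsupp).edges := by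
        intro hmem'
        have h2 : s(z, u) ∈ (Walk.cons h q).edges :=
          Walk.edges_takeUntil_subset _ hzsupp hmem'
        rw [Walk.edges_cons] at h2
        rcases List.mem_cons.1 h2 with h3 | h3
        · rw [Sym2.eq_iff] at h3
          rcases h3 with ⟨rfl, rfl⟩ | ⟨h4, h5⟩
          · exact G.loopless.irrefl _ hadjz
          · exact hzc h4
        · have : z ∈ q.support := Walk.fst_mem_support_of_mem_edges q h3
          -- also u ∈ q.support
          have h5 : s(u, z) ∈ q.edges := by rwa [Sym2.eq_swap] at h3
          have h6 : u ∈ q.support := Walk.fst_mem_support_of_mem_edges q h5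
          rw [Walk.cons_isPath_iff] at hp
          exact hp.2 h6
      have := hac _ (SimpleGraph.Path.cons_isCycle
        ⟨(Walk.cons h q).takeUntil z hzsupp, htu⟩ hadjz.symm hedges)
      exact this
    · -- extend the path
      have hext : (Walk.cons hadjz.symm (Walk.cons h q)).IsPath := by
        rw [Walk.cons_isPath_iff]
        exact ⟨hp, hzsupp⟩
      have : (Walk.cons hadjz.symm (Walk.cons h q)).length ∈ L := by
        refine ⟨z, v, _, hext, ?_, rfl⟩
        intro x hx
        rw [Walk.support_cons] at hx
        rcases List.mem_cons.1 hx with rfl | hx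
        · exact hz
        · exact hsupp x hx
      have hle := le_csSup hbddL this
      simp only [Walk.length_cons] at hle hlen
      omega
end Leaf

section Main
variable {V : Type*} [Fintype V]

lemma main_lemma (G : SimpleGraph V) (hac : G.IsAcyclic) :
    ∀ n (s D : Finset V), s.card ≤ n →
      (∃ a ∈ s, ∃ b ∈ s, G.Adj a b) →
      D ⊆ s →
      (∀ a ∈ D, ∀ b ∈ D, ¬ G.Adj a b) →
      (∀ x ∈ s, ∀ y ∈ s, G.Adj x y → (∀ z ∈ s, G.Adj x z → z = y) → x ∈ D) →
      indA G s + 1 ≤ indA G (s \ D) + D.card := by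
  intro n
  induction n with
  | zero =>
    rintro s D hcard ⟨a, ha, -⟩ - - -
    rw [Finset.card_eq_zero.1 (Nat.le_zero.1 hcard)] at ha
    simp at ha
  | succ n IH =>
    rintro s D hcard hedge hDs hDind hleaf
    classical
    -- get a leaf u with unique neighbor v
    obtain ⟨u, hu, v, hv, huv, huniq⟩ := exists_leaf G hac s hedge
    have huvne : u ≠ v := huv.ne
    have huD : u ∈ D := hleaf u hu v hv huv huniq
    have hvD : v ∉ D := fun h => hDind u huD v h huv
    have hv' : v ∈ s.erase u := Finset.mem_erase.2 ⟨huvne.symm, hv⟩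
    have hDcard1 : 1 ≤ D.card := Finset.card_pos.2 ⟨u, huD⟩
    have hcards : 2 ≤ s.card := by
      have : ({u, v} : Finset V) ⊆ s := by
        intro z hz; rcases Finset.mem_insert.1 hz with rfl | hz
        · exact hu
        · rw [Finset.mem_singleton.1 hz]; exact hv
      have h2 := Finset.card_le_card this
      rwa [Finset.card_insert_of_notMem (by simp [huvne]), Finset.card_singleton] at h2
    have hDscard : D.card ≤ s.card := Finset.card_le_card hDs
    have hserase : (s.erase u).card = s.card - 1 := Finset.card_erase_of_mem hu
    have hDerase : (D.erase u).card = D.card - 1 := Finset.card_erase_of_mem huD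
    by_cases hs'edge : ∃ a ∈ s.erase u, ∃ b ∈ s.erase u, G.Adj a b
    case neg =>
      -- then v is also a leaf, so v ∈ D, contradiction
      exfalso
      have huniqv : ∀ z ∈ s, G.Adj v z → z = u := by
        intro z hz hadj
        by_contra hzu
        exact hs'edge ⟨v, hv', z, Finset.mem_erase.2 ⟨hzu, hz⟩, hadj⟩
      exact hvD (hleaf v hv u hu huv.symm huniqv)
    case pos =>
    by_cases hw : ∃ w ∈ s.erase u, G.Adj v w ∧ ∀ z ∈ s.erase u, G.Adj v z → z = w
    case neg =>
      -- Case B1 : v is not a leaf of s' = s.erase u ; recurse on (s', D.erase u)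
      have hsub : D.erase u ⊆ s.erase u :=
        fun d hd => Finset.mem_erase.2 ⟨(Finset.mem_erase.1 hd).1, hDs (Finset.mem_erase.1 hd).2⟩
      have hind' : ∀ a ∈ D.erase u, ∀ b ∈ D.erase u, ¬ G.Adj a b :=
        fun a ha b hb => hDind a (Finset.mem_of_mem_erase ha) b (Finset.mem_of_mem_erase hb)
      have hleaf' : ∀ x ∈ s.erase u, ∀ y ∈ s.erase u, G.Adj x y →
          (∀ z ∈ s.erase u, G.Adj x z → z = y) → x ∈ D.erase u := by
        intro x hx y hy hadj huniq'
        have hxu : x ≠ u := (Finset.mem_erase.1 hx).1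
        have hxs : x ∈ s := Finset.mem_of_mem_erase hx
        have hxv : x ≠ v := by
          rintro rfl
          exact hw ⟨y, hy, hadj, huniq'⟩
        have hxadju : ¬ G.Adj x u := fun h => hxv (huniq x hxs h.symm)
        have hxD : x ∈ D := by
          refine hleaf x hxs y (Finset.mem_of_mem_erase hy) hadj ?_
          intro z hz hadjz
          by_cases hzu : z = u
          · exact absurd (hzu ▸ hadjz) hxadju
          · exact huniq' z (Finset.mem_erase.2 ⟨hzu, hz⟩) hadjz
        exact Finset.mem_erase.2 ⟨hxu, hxD⟩
      have hIH := IH (s.erase u) (D.erase u) (by omega) hs'edge hsub hind' hleaf'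
      have hsd : s.erase u \ D.erase u = s \ D := by
        ext z
        simp only [Finset.mem_sdiff, Finset.mem_erase]
        constructor
        · rintro ⟨⟨hzu, hzs⟩, hzD⟩
          exact ⟨hzs, fun hzD' => hzD ⟨hzu, hzD'⟩⟩
        · rintro ⟨hzs, hzD⟩
          exact ⟨⟨fun h => hzD (h ▸ huD), hzs⟩, fun hc => hzD hc.2⟩
      rw [hsd, hDerase] at hIH
      have h2 : indA G s ≤ indA G (s.erase u) + 1 := indA_le_erase G s u
      omega
    case pos =>
    obtain ⟨w, hw', hvw, hwuniq⟩ := hw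
    have hws : w ∈ s := Finset.mem_of_mem_erase hw'
    have hwu : w ≠ u := (Finset.mem_erase.1 hw').1
    have hwv : w ≠ v := hvw.ne.symm
    have hvnbrs : ∀ z ∈ s, G.Adj v z → z = u ∨ z = w := by
      intro z hz hadj
      by_cases hzu : z = u
      · exact Or.inl hzu
      · exact Or.inr (hwuniq z (Finset.mem_erase.2 ⟨hzu, hz⟩) hadj)
    set C : Finset V := (s.erase u).erase v with hC
    have hwC : w ∈ C := Finset.mem_erase.2 ⟨hwv, hw'⟩
    have hCcard : C.card = (s.erase u).card - 1 := Finset.card_erase_of_mem hv'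
    have hCsub : C ⊆ s := fun z hz => Finset.mem_of_mem_erase (Finset.mem_of_mem_erase hz)
    have hmemC : ∀ z, z ∈ C ↔ (z ≠ v ∧ z ≠ u ∧ z ∈ s) := by
      intro z
      simp only [hC, Finset.mem_erase]
    have hDsubC : D.erase u ⊆ C := by
      intro d hd
      obtain ⟨hdu, hdD⟩ := Finset.mem_erase.1 hd
      exact (hmemC d).2 ⟨fun h => hvD (h ▸ hdD), hdu, hDs hdD⟩
    have hsC : indA G s ≤ indA G C + 1 := indA_le_erase_pair G huv
    by_cases hCedge : ∃ a ∈ C, ∃ b ∈ C, G.Adj a b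
    case neg =>
      -- Case B2a : no edge in C; direct counting
      have hwD : w ∈ D := by
        refine hleaf w hws v hv hvw.symm ?_
        intro z hz hadjz
        by_cases hzv : z = v
        · exact hzv
        · exfalso
          by_cases hzu : z = u
          · exact hwv (huniq w hws (hzu ▸ hadjz).symm)
          · exact hCedge ⟨w, hwC, z, (hmemC z).2 ⟨hzv, hzu, hz⟩, hadjz⟩
      have hedgeless : ∀ a ∈ s \ D, ∀ b ∈ s \ D, ¬ G.Adj a b := by
        intro a ha b hb hadj
        obtain ⟨has, haD⟩ := Finset.mem_sdiff.1 ha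
        obtain ⟨hbs, hbD⟩ := Finset.mem_sdiff.1 hb
        have hau : a ≠ u := fun h => haD (h ▸ huD)
        have hbu : b ≠ u := fun h => hbD (h ▸ huD)
        have haw : a ≠ w := fun h => haD (h ▸ hwD)
        have hbw : b ≠ w := fun h => hbD (h ▸ hwD)
        by_cases hav : a = v
        · rcases hvnbrs b hbs (hav ▸ hadj) with h | h
          · exact hbu h
          · exact hbw h
        by_cases hbv : b = v
        · rcases hvnbrs a has (hbv ▸ hadj).symm with h | h
          · exact hau h
          · exact haw h
        exact hCedge ⟨a, (hmemC a).2 ⟨hav, hau, has⟩, b, (hmemC b).2 ⟨hbv, hbu, hbs⟩, hadj⟩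
      have h1 : indA G (s \ D) = (s \ D).card := indA_edgeless G hedgeless
      have h2 : (s \ D).card + D.card = s.card := Finset.card_sdiff_add_card_eq_card hDs
      have h3 : indA G C = C.card :=
        indA_edgeless G (fun a ha b hb hadj => hCedge ⟨a, ha, b, hb, hadj⟩)
      omega
    case pos =>
    -- common facts used by remaining cases
    have hxleafC : ∀ x ∈ C, x ≠ w → ∀ y ∈ C, G.Adj x y →
        (∀ z ∈ C, G.Adj x z → z = y) → x ∈ D.erase u := by
      intro x hx hxw y hy hadj huniq'
      obtain ⟨hxv, hxu, hxs⟩ := (hmemC x).1 hx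
      have hxadju : ¬ G.Adj x u := fun h => hxv (huniq x hxs h.symm)
      have hxadjv : ¬ G.Adj x v := by
        intro h
        rcases hvnbrs x hxs h.symm with h' | h'
        · exact hxu h'
        · exact hxw h'
      have hxD : x ∈ D := by
        refine hleaf x hxs y (hCsub hy) hadj ?_
        intro z hz hadjz
        by_cases hzu : z = u
        · exact absurd (hzu ▸ hadjz) hxadju
        by_cases hzv : z = v
        · exact absurd (hzv ▸ hadjz) hxadjv
        · exact huniq' z ((hmemC z).2 ⟨hzv, hzu, hz⟩) hadjz
      exact Finset.mem_erase.2 ⟨hxu, hxD⟩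
    by_cases hcasea : w ∈ D ∨ ¬ (∃ x3 ∈ C, G.Adj w x3 ∧ ∀ z ∈ C, G.Adj w z → z = x3)
    case pos =>
      -- Case (a) : recurse on (C, D.erase u)
      have hind' : ∀ a ∈ D.erase u, ∀ b ∈ D.erase u, ¬ G.Adj a b :=
        fun a ha b hb => hDind a (Finset.mem_of_mem_erase ha) b (Finset.mem_of_mem_erase hb)
      have hleaf' : ∀ x ∈ C, ∀ y ∈ C, G.Adj x y →
          (∀ z ∈ C, G.Adj x z → z = y) → x ∈ D.erase u := by
        intro x hx y hy hadj huniq'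
        by_cases hxw : x = w
        · rcases hcasea with hwD | hnx3
          · exact Finset.mem_erase.2 ⟨hxw ▸ hwu, hxw ▸ hwD⟩
          · exact absurd ⟨y, hy, hxw ▸ hadj, fun z hz hadjz => huniq' z hz (by rwa [hxw])⟩ hnx3
        · exact hxleafC x hx hxw y hy hadj huniq'
      have hIH := IH C (D.erase u) (by omega) hCedge hDsubC hind' hleaf'
      have hsd : C \ D.erase u = (s \ D).erase v := by
        ext z
        simp only [Finset.mem_sdiff, Finset.mem_erase, hmemC z]
        constructor
        · rintro ⟨⟨hzv, hzu, hzs⟩, hzD⟩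
          exact ⟨hzv, hzs, fun hzD' => hzD ⟨hzu, hzD'⟩⟩
        · rintro ⟨hzv, hzs, hzD⟩
          exact ⟨⟨hzv, fun h => hzD (h ▸ huD), hzs⟩, fun hc => hzD hc.2⟩
      rw [hsd, hDerase] at hIH
      have hmono : indA G ((s \ D).erase v) ≤ indA G (s \ D) :=
        indA_mono G (Finset.erase_subset _ _)
      omega
    case neg =>
      push_neg at hcasea
      obtain ⟨hwD, x3, hx3C, hwx3, hx3uniq⟩ := hcasea
      obtain ⟨hx3v, hx3u, hx3s⟩ := (hmemC x3).1 hx3C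
      have hx3w : x3 ≠ w := hwx3.ne.symm
      have hwnbrs : ∀ z ∈ s, G.Adj w z → z = v ∨ z = x3 := by
        intro z hz hadj
        by_cases hzu : z = u
        · exact absurd (huniq w hws (hzu ▸ hadj).symm) hwv
        by_cases hzv : z = v
        · exact Or.inl hzv
        · exact Or.inr (hx3uniq z ((hmemC z).2 ⟨hzv, hzu, hz⟩) hadj)
      -- v can be added to any independent set avoiding u and w
      have hvsD : v ∈ s \ D := Finset.mem_sdiff.2 ⟨hv, hvD⟩
      have hwsD : w ∈ s \ D := Finset.mem_sdiff.2 ⟨hws, hwD⟩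
      have hLext : indA G (((s \ D).erase v).erase w) + 1 ≤ indA G (s \ D) := by
        refine indA_ext G hvsD (Finset.erase_subset _ _) ?_
        intro y hy hadj
        obtain ⟨hyw, hyv, hys, hyD⟩ : y ≠ w ∧ y ≠ v ∧ y ∈ s ∧ y ∉ D := by
          obtain ⟨hyw, hy2⟩ := Finset.mem_erase.1 hy
          obtain ⟨hyv, hy3⟩ := Finset.mem_erase.1 hy2
          exact ⟨hyw, hyv, (Finset.mem_sdiff.1 hy3).1, (Finset.mem_sdiff.1 hy3).2⟩
        rcases hvnbrs y hys hadj with h | h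
        · exact hyD (h ▸ huD)
        · exact hyw h
      by_cases hx3D : x3 ∈ D
      case neg =>
        -- Case b-i : recurse on (C, insert w (D.erase u))
        set D2 : Finset V := insert w (D.erase u) with hD2
        have hD2sub : D2 ⊆ C := by
          intro d hd
          rcases Finset.mem_insert.1 hd with rfl | hd
          · exact hwC
          · exact hDsubC hd
        have hD2ind : ∀ a ∈ D2, ∀ b ∈ D2, ¬ G.Adj a b := by
          intro a ha b hb hadj
          rcases Finset.mem_insert.1 ha with ha | ha <;> rcases Finset.mem_insert.1 hb with hb | hb
          · rw [ha, hb] at hadj; exact G.loopless.irrefl w hadj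
          · rw [ha] at hadj
            rcases hwnbrs b (hDs (Finset.mem_of_mem_erase hb)) hadj with h | h
            · exact hvD (h ▸ Finset.mem_of_mem_erase hb)
            · exact hx3D (h ▸ Finset.mem_of_mem_erase hb)
          · rw [hb] at hadj
            rcases hwnbrs a (hDs (Finset.mem_of_mem_erase ha)) hadj.symm with h | h
            · exact hvD (h ▸ Finset.mem_of_mem_erase ha)
            · exact hx3D (h ▸ Finset.mem_of_mem_erase ha)
          · exact hDind a (Finset.mem_of_mem_erase ha) b (Finset.mem_of_mem_erase hb) hadj
        have hleaf' : ∀ x ∈ C, ∀ y ∈ C, G.Adj x y →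
            (∀ z ∈ C, G.Adj x z → z = y) → x ∈ D2 := by
          intro x hx y hy hadj huniq'
          by_cases hxw : x = w
          · rw [hxw]; exact Finset.mem_insert_self _ _
          · exact Finset.mem_insert_of_mem (hxleafC x hx hxw y hy hadj huniq')
        have hIH := IH C D2 (by omega) hCedge hD2sub hD2ind hleaf'
        have hD2card : D2.card = D.card := by
          have hwnD : w ∉ D.erase u := fun h => hwD (Finset.mem_of_mem_erase h)
          rw [hD2, Finset.card_insert_of_notMem hwnD, hDerase]
          omega
        have hsd : C \ D2 = ((s \ D).erase v).erase w := by
          ext z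
          simp only [Finset.mem_sdiff, Finset.mem_erase, hmemC z, hD2, Finset.mem_insert]
          constructor
          · rintro ⟨⟨hzv, hzu, hzs⟩, hzD⟩
            push_neg at hzD
            exact ⟨hzD.1, hzv, hzs, fun hzD' => hzD.2 hzu hzD'⟩
          · rintro ⟨hzw, hzv, hzs, hzD⟩
            refine ⟨⟨hzv, fun h => hzD (h ▸ huD), hzs⟩, ?_⟩
            rintro (h | h)
            · exact hzw h
            · exact hzD h.2
        rw [hsd, hD2card] at hIH
        omega
      case pos =>
        -- Case b-ii : x3 ∈ D
        set C2 : Finset V := C.erase w with hC2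
        have hmemC2 : ∀ z, z ∈ C2 ↔ (z ≠ w ∧ z ≠ v ∧ z ≠ u ∧ z ∈ s) := by
          intro z
          simp only [hC2, Finset.mem_erase, hmemC z]
        have hx3C2 : x3 ∈ C2 := Finset.mem_erase.2 ⟨hx3w, hx3C⟩
        have hC2card : C2.card = C.card - 1 := Finset.card_erase_of_mem hwC
        have hDsubC2 : D.erase u ⊆ C2 := by
          intro d hd
          refine Finset.mem_erase.2 ⟨?_, hDsubC hd⟩
          exact fun h => hwD (h ▸ Finset.mem_of_mem_erase hd)
        have hCpair : indA G C ≤ indA G ((C.erase w).erase x3) + 1 := indA_le_erase_pair G hwx3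
        have hCx3sub : (C.erase w).erase x3 ⊆ C2 := by
          rw [hC2]; exact Finset.erase_subset _ _
        have hsd2 : C2 \ D.erase u = ((s \ D).erase v).erase w := by
          ext z
          simp only [Finset.mem_sdiff, Finset.mem_erase, hmemC2 z]
          constructor
          · rintro ⟨⟨hzw, hzv, hzu, hzs⟩, hzD⟩
            exact ⟨hzw, hzv, hzs, fun hzD' => hzD ⟨hzu, hzD'⟩⟩
          · rintro ⟨hzw, hzv, hzs, hzD⟩
            exact ⟨⟨hzw, hzv, fun h => hzD (h ▸ huD), hzs⟩, fun hc => hzD hc.2⟩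
        by_cases hC2edge : ∃ a ∈ C2, ∃ b ∈ C2, G.Adj a b
        case pos =>
          have hind' : ∀ a ∈ D.erase u, ∀ b ∈ D.erase u, ¬ G.Adj a b :=
            fun a ha b hb => hDind a (Finset.mem_of_mem_erase ha) b (Finset.mem_of_mem_erase hb)
          have hleaf' : ∀ x ∈ C2, ∀ y ∈ C2, G.Adj x y →
              (∀ z ∈ C2, G.Adj x z → z = y) → x ∈ D.erase u := by
            intro x hx y hy hadj huniq'
            obtain ⟨hxw, hxv, hxu, hxs⟩ := (hmemC2 x).1 hx
            by_cases hxx3 : x = x3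
            · exact Finset.mem_erase.2 ⟨hxx3 ▸ hx3u, hxx3 ▸ hx3D⟩
            have hxadju : ¬ G.Adj x u := fun h => hxv (huniq x hxs h.symm)
            have hxadjv : ¬ G.Adj x v := by
              intro h
              rcases hvnbrs x hxs h.symm with h' | h'
              · exact hxu h'
              · exact hxw h'
            have hxadjw : ¬ G.Adj x w := by
              intro h
              rcases hwnbrs x hxs h.symm with h' | h'
              · exact hxv h'
              · exact hxx3 h'
            have hxD : x ∈ D := by
              refine hleaf x hxs y (hCsub (Finset.mem_of_mem_erase hy)) hadj ?_
              intro z hz hadjz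
              by_cases hzu : z = u
              · exact absurd (hzu ▸ hadjz) hxadju
              by_cases hzv : z = v
              · exact absurd (hzv ▸ hadjz) hxadjv
              by_cases hzw : z = w
              · exact absurd (hzw ▸ hadjz) hxadjw
              · exact huniq' z ((hmemC2 z).2 ⟨hzw, hzv, hzu, hz⟩) hadjz
            exact Finset.mem_erase.2 ⟨hxu, hxD⟩
          have hIH := IH C2 (D.erase u) (by omega) hC2edge hDsubC2 hind' hleaf'
          rw [hsd2, hDerase] at hIH
          have hmono2 : indA G ((C.erase w).erase x3) ≤ indA G C2 := indA_mono G hCx3sub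
          omega
        case neg =>
          -- final counting case
          have hedgeless3 : ∀ a ∈ (C.erase w).erase x3, ∀ b ∈ (C.erase w).erase x3,
              ¬ G.Adj a b := fun a ha b hb hadj =>
            hC2edge ⟨a, hCx3sub ha, b, hCx3sub hb, hadj⟩
          have h3 : indA G ((C.erase w).erase x3) = ((C.erase w).erase x3).card :=
            indA_edgeless G hedgeless3
          have h3card : ((C.erase w).erase x3).card = (C.erase w).card - 1 :=
            Finset.card_erase_of_mem (Finset.mem_erase.2 ⟨hx3w, hx3C⟩)
          have h4card : (C.erase w).card = C.card - 1 := Finset.card_erase_of_mem hwC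
          have hCcard2 : 2 ≤ C.card := by
            have : ({w, x3} : Finset V) ⊆ C := by
              intro z hz
              rcases Finset.mem_insert.1 hz with rfl | hz
              · exact hwC
              · rw [Finset.mem_singleton.1 hz]; exact hx3C
            have h5 := Finset.card_le_card this
            rwa [Finset.card_insert_of_notMem (fun h => hx3w (Finset.mem_singleton.1 h).symm), Finset.card_singleton] at h5
          -- t := ((s\D).erase v).erase w is edgeless
          have hedgelesst : ∀ a ∈ ((s \ D).erase v).erase w, ∀ b ∈ ((s \ D).erase v).erase w,
              ¬ G.Adj a b := by
            intro a ha b hb hadj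
            have hmemt : ∀ z, z ∈ ((s \ D).erase v).erase w → z ∈ C2 := by
              intro z hz
              obtain ⟨hzw, hz2⟩ := Finset.mem_erase.1 hz
              obtain ⟨hzv, hz3⟩ := Finset.mem_erase.1 hz2
              obtain ⟨hzs, hzD⟩ := Finset.mem_sdiff.1 hz3
              exact (hmemC2 z).2 ⟨hzw, hzv, fun h => hzD (h ▸ huD), hzs⟩
            exact hC2edge ⟨a, hmemt a ha, b, hmemt b hb, hadj⟩
          have ht : indA G (((s \ D).erase v).erase w) = (((s \ D).erase v).erase w).card :=
            indA_edgeless G hedgelesst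
          have htcard : (((s \ D).erase v).erase w).card = ((s \ D).erase v).card - 1 :=
            Finset.card_erase_of_mem (Finset.mem_erase.2 ⟨hwv, hwsD⟩)
          have htcard2 : ((s \ D).erase v).card = (s \ D).card - 1 :=
            Finset.card_erase_of_mem hvsD
          have hsDcard : (s \ D).card + D.card = s.card := Finset.card_sdiff_add_card_eq_card hDs
          have hsD2 : 2 ≤ (s \ D).card := by
            have : ({v, w} : Finset V) ⊆ s \ D := by
              intro z hz
              rcases Finset.mem_insert.1 hz with rfl | hz
              · exact hvsD
              · rw [Finset.mem_singleton.1 hz]; exact hwsD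
            have h5 := Finset.card_le_card this
            rwa [Finset.card_insert_of_notMem (fun h => hwv (Finset.mem_singleton.1 h).symm), Finset.card_singleton] at h5
          omega
end Main

end Aux

section Final
variable {V : Type*} [Fintype V]

lemma indepNum_eq_indA (T : SimpleGraph V) : _root_.indepNum T = indA T Finset.univ := by
  unfold _root_.indepNum indA
  congr 1
  ext n
  constructor
  · rintro ⟨s, hind, hcard⟩; exact ⟨s, Finset.subset_univ s, hind, hcard⟩
  · rintro ⟨s, -, hind, hcard⟩; exact ⟨s, hind, hcard⟩

lemma indepNum_vdel_eq (T : SimpleGraph V) (D : Set V) :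
    _root_.indepNum (vdel T D) = indA T D.toFinsetᶜ := by
  classical
  unfold _root_.indepNum indA
  congr 1
  ext n
  constructor
  · rintro ⟨s, hind, hcard⟩
    refine ⟨s.map (Function.Embedding.subtype _), ?_, ?_, ?_⟩
    · intro a ha
      obtain ⟨a', ha', rfl⟩ := Finset.mem_map.1 ha
      simp only [Finset.mem_compl, Set.mem_toFinset, Function.Embedding.coe_subtype]
      exact a'.2
    · intro a ha b hb hadj
      obtain ⟨a', ha', rfl⟩ := Finset.mem_map.1 ha
      obtain ⟨b', hb', rfl⟩ := Finset.mem_map.1 hb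
      exact hind a' ha' b' hb' hadj
    · rw [Finset.card_map, hcard]
  · rintro ⟨t, hsub, hind, hcard⟩
    refine ⟨t.subtype (· ∈ (Dᶜ : Set V)), ?_, ?_⟩
    · intro a ha b hb hadj
      rw [Finset.mem_subtype] at ha hb
      exact hind a ha b hb hadj
    · rw [Finset.card_subtype, Finset.filter_true_of_mem, hcard]
      intro x hx
      have := hsub hx
      simpa using this
end Final

theorem exists_pendant_not_mem {V : Type*} [Fintype V] (T : SimpleGraph V)
    (hconn : T.Connected) (hac : T.IsAcyclic) (hE : T.edgeSet.Nonempty)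
    (D : Set V) (hD : _root_.indepNum T = _root_.indepNum (vdel T D) + D.ncard) :
    ∃ x : V, T.degree x = 1 ∧ x ∉ D := by
  classical
  set Df : Finset V := D.toFinset with hDf
  have hDcompl : _root_.indepNum (vdel T D) = indA T Dfᶜ := indepNum_vdel_eq T D
  have hDncard : D.ncard = Df.card := Set.ncard_eq_toFinset_card' D
  have hD' : indA T Finset.univ = indA T Dfᶜ + Df.card := by
    rw [← indepNum_eq_indA, ← hDcompl, ← hDncard]; exact hD
  -- an edge
  obtain ⟨a, b, hab⟩ : ∃ a b : V, T.Adj a b := by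
    obtain ⟨e, he⟩ := hE
    induction e with
    | h a b => exact ⟨a, b, he⟩
  -- D.toFinset is independent
  have hDind : ∀ a ∈ Df, ∀ b ∈ Df, ¬ T.Adj a b := by
    by_contra hcon
    push_neg at hcon
    obtain ⟨p, hpD, q, hqD, hpq⟩ := hcon
    obtain ⟨t, htsub, htind, htcard⟩ := indA_spec T Finset.univ
    obtain ⟨c, hcD, hct⟩ : ∃ c, c ∈ Df ∧ c ∉ t := by
      by_cases h : p ∈ t
      · exact ⟨q, hqD, fun hq => htind p h q hq hpq⟩
      · exact ⟨p, hpD, h⟩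
    have h1 : (t \ Df).card ≤ indA T Dfᶜ := by
      refine le_indA T ?_ ?_
      · intro z hz
        exact Finset.mem_compl.2 (Finset.mem_sdiff.1 hz).2
      · intro x hx y hy
        exact htind x (Finset.mem_sdiff.1 hx).1 y (Finset.mem_sdiff.1 hy).1
    have h2 : (t ∩ Df).card ≤ Df.card - 1 := by
      have hsub : t ∩ Df ⊆ Df.erase c := by
        intro z hz
        exact Finset.mem_erase.2 ⟨fun h => hct (h ▸ (Finset.mem_inter.1 hz).1),
          (Finset.mem_inter.1 hz).2⟩
      have := Finset.card_le_card hsub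
      rwa [Finset.card_erase_of_mem hcD] at this
    have h3 : (t \ Df).card + (t ∩ Df).card = t.card := Finset.card_sdiff_add_card_inter t Df
    have h4 : 1 ≤ Df.card := Finset.card_pos.2 ⟨c, hcD⟩
    omega
  -- suppose no pendant vertex outside D
  by_contra hno
  push_neg at hno
  have hleaf : ∀ x ∈ (Finset.univ : Finset V), ∀ y ∈ (Finset.univ : Finset V), T.Adj x y →
      (∀ z ∈ (Finset.univ : Finset V), T.Adj x z → z = y) → x ∈ Df := by
    intro x _ y _ hadj huniq
    have hdeg : T.degree x = 1 := by
      have hnb : T.neighborFinset x = {y} := by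
        ext z
        simp only [SimpleGraph.mem_neighborFinset, Finset.mem_singleton]
        exact ⟨fun h => huniq z (Finset.mem_univ z) h, fun h => h ▸ hadj⟩
      rw [SimpleGraph.degree, hnb, Finset.card_singleton]
    exact Set.mem_toFinset.2 (hno x hdeg)
  have hmain := main_lemma T hac (Finset.univ : Finset V).card Finset.univ Df le_rfl
    ⟨a, Finset.mem_univ a, b, Finset.mem_univ b, hab⟩ (Finset.subset_univ Df) hDind hleaf
  rw [← Finset.compl_eq_univ_sdiff] at hmain
  omega
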